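/- For the path graph P_n on n vertices: st_D(P_2) = 1, st_D(P_3) = 2, st_D(P_4) = 3, st_D(P_5) = 1, and st_D(P_n) = 2 for every n ≥ 6. -/
import Mathlib


open SimpleGraph

/-- The distinguishing number of a graph: the least `d` such that there is a vertex
labeling with `d` labels preserved only by the trivial automorphism. -/
noncomputable def distNum {V : Type*} (G : SimpleGraph V) : ℕ :=
  sInf {d : ℕ | ∃ f : V → Fin d, ∀ φ : G ≃g G, (∀ x, f (φ x) = f x) → ∀ x, φ x = x}

/-- The distinguishing stability of a graph: the minimum cardinality of a proper subset
`S` of the vertex set whose removal changes the distinguishing number. -/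
noncomputable def stD {V : Type*} (G : SimpleGraph V) : ℕ :=
  sInf {k : ℕ | ∃ S : Set V, S ≠ Set.univ ∧ S.ncard = k ∧
    distNum (G.induce Sᶜ) ≠ distNum G}

/-- The distinguishing bondage number of a graph: the minimum cardinality of a set
of edges whose removal changes the distinguishing number. -/
noncomputable def bD {V : Type*} (G : SimpleGraph V) : ℕ :=
  sInf {k : ℕ | ∃ F : Set (Sym2 V), F ⊆ G.edgeSet ∧ F.ncard = k ∧
    distNum (G.deleteEdges F) ≠ distNum G}

section Basic
variable {V : Type*} {G : SimpleGraph V}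

def Dg {d : ℕ} (G : SimpleGraph V) (f : V → Fin d) : Prop :=
  ∀ φ : G ≃g G, (∀ x, f (φ x) = f x) → ∀ x, φ x = x

lemma distNum_le {d : ℕ} (f : V → Fin d) (hf : Dg G f) : distNum G ≤ d :=
  Nat.sInf_le ⟨f, hf⟩

lemma dset_nonempty [Finite V] :
    {d : ℕ | ∃ f : V → Fin d, Dg G f}.Nonempty := by
  obtain ⟨m, ⟨e⟩⟩ := Finite.exists_equiv_fin V
  exact ⟨m, e, fun φ h x => e.injective (h x)⟩

lemma distNum_exists [Finite V] : ∃ f : V → Fin (distNum G), Dg G f :=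
  Nat.sInf_mem (dset_nonempty (G := G))

lemma le_distNum [Finite V] {k : ℕ}
    (h : ∀ d, ∀ f : V → Fin d, Dg G f → k ≤ d) : k ≤ distNum G := by
  obtain ⟨f, hf⟩ := distNum_exists (G := G)
  exact h _ f hf

lemma two_le_distNum [Finite V] (φ : G ≃g G) (x : V) (hx : φ x ≠ x) :
    2 ≤ distNum G := by
  refine le_distNum (fun d f hf => ?_)
  by_contra h
  interval_cases d
  · exact (f x).elim0
  · exact hx (hf φ (fun y => Subsingleton.elim _ _) x)

lemma distNum_congr {W : Type*} {H : SimpleGraph W} (e : G ≃g H) :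
    distNum G = distNum H := by
  unfold distNum
  congr 1
  ext d
  constructor
  · rintro ⟨f, hf⟩
    refine ⟨f ∘ e.symm, fun ψ h y => ?_⟩
    have key : ∀ x : V, e.symm (ψ (e x)) = x := by
      intro x
      exact hf ((e.trans ψ).trans e.symm) (fun z => by
        have := h (e z); simpa using this) x
    have := key (e.symm y)
    rw [RelIso.apply_symm_apply] at this
    exact e.symm.injective (by simpa using this)
  · rintro ⟨f, hf⟩
    refine ⟨f ∘ e, fun ψ h y => ?_⟩
    have key : ∀ x : W, e (ψ (e.symm x)) = x := by
      intro x
      exact hf ((e.symm.trans ψ).trans e) (fun z => by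
        have := h (e.symm z); simpa using this) x
    have := key (e y)
    rw [RelIso.symm_apply_apply] at this
    exact e.injective this

lemma distNum_eq_one [Finite V] [Nonempty V] [Subsingleton V] : distNum G = 1 := by
  refine le_antisymm (distNum_le (fun _ => 0) (fun φ h x => Subsingleton.elim _ _)) ?_
  refine le_distNum (fun d f hf => ?_)
  rcases Nat.eq_zero_or_pos d with h | h
  · subst h; exact (f (Classical.arbitrary V)).elim0
  · exact h

lemma distNum_eq_two_of_two_elems [Finite V] (a b : V) (hab : a ≠ b)
    (hall : ∀ c : V, c = a ∨ c = b) : distNum G = 2 := by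
  classical
  refine le_antisymm ?_ ?_
  · refine distNum_le (fun c => if c = a then 0 else 1) (fun φ h x => ?_)
    have ha : φ a = a := by
      rcases hall (φ a) with h1 | h1
      · exact h1
      · exfalso
        have h2 : (if φ a = a then (0 : Fin 2) else 1) = if a = a then 0 else 1 := h a
        rw [h1, if_neg hab.symm, if_pos rfl] at h2
        exact absurd h2 (by decide)
    rcases hall x with h | h <;> subst h
    · exact ha
    · rcases hall (φ x) with h1 | h1
      · exact absurd (φ.injective (h1.trans ha.symm)) (Ne.symm hab)
      · exact h1
  · have hiso : ∀ x y : V, G.Adj (Equiv.swap a b x) (Equiv.swap a b y) ↔ G.Adj x y := by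
      intro x y
      rcases hall x with rfl | rfl <;> rcases hall y with rfl | rfl <;>
        simp [Equiv.swap_apply_left, Equiv.swap_apply_right, G.adj_comm]
    exact two_le_distNum ⟨Equiv.swap a b, hiso _ _⟩ a
      (by rw [show (⟨Equiv.swap a b, hiso _ _⟩ : G ≃g G) a = Equiv.swap a b a from rfl,
        Equiv.swap_apply_left]; exact hab.symm)

end Basic

section Auto
variable {V : Type*} {G : SimpleGraph V}

/-- An involutive map preserving adjacency one way gives a graph automorphism. -/
lemma iso_of_involutive (π : V → V) (hinv : Function.Involutive π)
    (key : ∀ x y, G.Adj x y → G.Adj (π x) (π y)) :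
    ∃ e : G ≃g G, ∀ x, e x = π x := by
  refine ⟨⟨Function.Involutive.toPerm π hinv, ?_⟩, fun _ => rfl⟩
  intro a b
  constructor
  · intro h
    have := key _ _ h
    rwa [show Function.Involutive.toPerm π hinv a = π a from rfl,
      show Function.Involutive.toPerm π hinv b = π b from rfl, hinv a, hinv b] at this
  · intro h
    exact key _ _ h

/-- Swapping the two endpoints of an isolated edge is an automorphism. -/
lemma isolated_edge_swap [DecidableEq V] (a b : V) (hadj : G.Adj a b)
    (ha : ∀ x, G.Adj x a → x = b) (hb : ∀ x, G.Adj x b → x = a) :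
    ∃ e : G ≃g G, ∀ x, e x = if x = a then b else if x = b then a else x := by
  set π : V → V := fun x => if x = a then b else if x = b then a else x with hπ
  have hab : a ≠ b := hadj.ne
  have hπa : π a = b := by simp [hπ]
  have hπb : π b = a := by simp [hπ, hab.symm]
  have hπo : ∀ x, x ≠ a → x ≠ b → π x = x := by intro x h1 h2; simp [hπ, h1, h2]
  have hinv : Function.Involutive π := by
    intro x
    by_cases h1 : x = a
    · subst h1; rw [hπa, hπb]
    · by_cases h2 : x = b
      · subst h2; rw [hπb, hπa]
      · rw [hπo x h1 h2, hπo x h1 h2]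
  refine iso_of_involutive π hinv ?_
  intro x y h
  by_cases h1 : x = a
  · subst h1
    have := ha y h.symm
    subst this
    rw [hπa, hπb]; exact hadj.symm
  · by_cases h2 : x = b
    · subst h2
      have := hb y h.symm
      subst this
      rw [hπa, hπb]; exact hadj
    · rw [hπo x h1 h2]
      by_cases h3 : y = a
      · subst h3; exact absurd (ha x h) h2
      · by_cases h4 : y = b
        · subst h4; exact absurd (hb x h) h1
        · rw [hπo y h3 h4]; exact h

/-- Swapping two isolated edges (a,b) ↦ (c,d) is an automorphism. -/
lemma two_isolated_edges_swap [DecidableEq V] (a b c d : V)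
    (hAB : G.Adj a b) (hCD : G.Adj c d)
    (ha : ∀ x, G.Adj x a → x = b) (hb : ∀ x, G.Adj x b → x = a)
    (hc : ∀ x, G.Adj x c → x = d) (hd : ∀ x, G.Adj x d → x = c)
    (hac : a ≠ c) (had : a ≠ d) (hbc : b ≠ c) (hbd : b ≠ d) :
    ∃ e : G ≃g G, ∀ x, e x =
      if x = a then c else if x = b then d else if x = c then a else if x = d then b else x := by
  set π : V → V := fun x =>
    if x = a then c else if x = b then d else if x = c then a else if x = d then b else x with hπ
  have hab : a ≠ b := hAB.ne
  have hcd : c ≠ d := hCD.ne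
  have hπa : π a = c := by simp [hπ]
  have hπb : π b = d := by simp [hπ, hab.symm]
  have hπc : π c = a := by simp [hπ, hac.symm, hbc.symm]
  have hπd : π d = b := by simp [hπ, had.symm, hbd.symm, hcd.symm]
  have hπo : ∀ x, x ≠ a → x ≠ b → x ≠ c → x ≠ d → π x = x := by
    intro x h1 h2 h3 h4; simp [hπ, h1, h2, h3, h4]
  have hinv : Function.Involutive π := by
    intro x
    by_cases h1 : x = a; · subst h1; rw [hπa, hπc]
    by_cases h2 : x = b; · subst h2; rw [hπb, hπd]
    by_cases h3 : x = c; · subst h3; rw [hπc, hπa]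
    by_cases h4 : x = d; · subst h4; rw [hπd, hπb]
    rw [hπo x h1 h2 h3 h4, hπo x h1 h2 h3 h4]
  refine iso_of_involutive π hinv ?_
  intro x y h
  by_cases h1 : x = a
  · subst h1; have := ha y h.symm; subst this; rw [hπa, hπb]; exact hCD
  by_cases h2 : x = b
  · subst h2; have := hb y h.symm; subst this; rw [hπa, hπb]; exact hCD.symm
  by_cases h3 : x = c
  · subst h3; have := hc y h.symm; subst this; rw [hπc, hπd]; exact hAB
  by_cases h4 : x = d
  · subst h4; have := hd y h.symm; subst this; rw [hπc, hπd]; exact hAB.symm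
  rw [hπo x h1 h2 h3 h4]
  by_cases k1 : y = a
  · subst k1; exact absurd (ha x h) h2
  by_cases k2 : y = b
  · subst k2; exact absurd (hb x h) h1
  by_cases k3 : y = c
  · subst k3; exact absurd (hc x h) h4
  by_cases k4 : y = d
  · subst k4; exact absurd (hd x h) h3
  rw [hπo y k1 k2 k3 k4]; exact h

/-- Propagation of fixed points along a path-shaped graph. -/
lemma fix_propagate (φ : G ≃g G) (ι : V → ℕ)
    (hinj : ∀ x y : V, ι x = ι y → x = y)
    (hadj : ∀ x y : V, G.Adj x y ↔ (ι x + 1 = ι y ∨ ι y + 1 = ι x))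
    (l r : ℕ) (hem : ∀ x : V, ι x + 1 ≠ l)
    (hfull : ∀ k, l ≤ k → k ≤ r → ∃ x : V, ι x = k)
    (hbase : ∀ x, ι x = l → φ x = x) :
    ∀ k, l ≤ k → k ≤ r → ∀ x, ι x = k → φ x = x := by
  intro k
  induction k using Nat.strong_induction_on with
  | _ k IH =>
    intro hlk hkr x hx
    rcases Nat.eq_or_lt_of_le hlk with h | h
    · exact hbase x (hx ▸ h.symm)
    -- k > l
    obtain ⟨y, hy⟩ := hfull (k - 1) (by omega) (by omega)
    have hyfix : φ y = y := IH (k - 1) (by omega) (by omega) (by omega) y hy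
    have hAdj : G.Adj y x := (hadj y x).2 (by omega)
    have hAdj2 : G.Adj y (φ x) := by
      have := φ.map_rel_iff.2 hAdj
      rwa [hyfix] at this
    rcases (hadj y (φ x)).1 hAdj2 with h1 | h1
    · exact hinj _ _ (by omega)
    · -- ι (φ x) + 1 = k - 1
      rcases Nat.eq_or_lt_of_le (show l ≤ k - 1 by omega) with h2 | h2
      · exact absurd (show ι (φ x) + 1 = l by omega) (hem (φ x))
      · obtain ⟨z, hz⟩ := hfull (k - 2) (by omega) (by omega)
        have hzfix : φ z = z := IH (k - 2) (by omega) (by omega) (by omega) z hz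
        have hfxz : φ x = φ z := hinj _ _ (by rw [hzfix]; omega)
        have hxz : x = z := φ.injective hfxz
        rw [hxz] at hx
        omega

end Auto


lemma induce_path_adj {n : ℕ} {S : Set (Fin n)} (a b : ↥Sᶜ) :
    ((pathGraph n).induce Sᶜ).Adj a b ↔ (a.1.1 + 1 = b.1.1 ∨ b.1.1 + 1 = a.1.1) := by
  simp [pathGraph_adj]

lemma path_reversal (n : ℕ) (hn : 2 ≤ n) :
    ∃ e : pathGraph n ≃g pathGraph n, ∀ x : Fin n, (e x).1 = n - 1 - x.1 := by
  have hinv : Function.Involutive (fun x : Fin n => (⟨n - 1 - x.1, by omega⟩ : Fin n)) := by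
    intro x
    ext
    simp only []
    omega
  have hkey : ∀ x y : Fin n, (pathGraph n).Adj x y →
      (pathGraph n).Adj (⟨n - 1 - x.1, by omega⟩ : Fin n) ⟨n - 1 - y.1, by omega⟩ := by
    intro x y h
    rw [pathGraph_adj] at h ⊢
    have hx := x.2
    have hy := y.2
    simp only []
    omega
  obtain ⟨e, he⟩ := iso_of_involutive (G := pathGraph n)
    (fun x : Fin n => (⟨n - 1 - x.1, by omega⟩ : Fin n)) hinv hkey
  exact ⟨e, fun x => by rw [he]⟩

lemma distNum_pathGraph (n : ℕ) (hn : 2 ≤ n) : distNum (pathGraph n) = 2 := by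
  refine le_antisymm ?_ ?_
  · refine distNum_le (fun x => if x.1 = 0 then 1 else 0) (fun φ h x => ?_)
    have h0 : φ ⟨0, by omega⟩ = ⟨0, by omega⟩ := by
      have h2 : (if (φ ⟨0, by omega⟩).1 = 0 then (1 : Fin 2) else 0)
          = (if (0 : ℕ) = 0 then 1 else 0) := h ⟨0, by omega⟩
      by_cases hy : (φ ⟨0, by omega⟩).1 = 0
      · exact Fin.ext hy
      · rw [if_neg hy, if_pos rfl] at h2
        exact absurd h2 (by decide)
    exact fix_propagate φ Fin.val (fun x y h => Fin.ext h) (fun x y => pathGraph_adj)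
      0 (n - 1) (fun x => by omega) (fun k _ hkr => ⟨⟨k, by omega⟩, rfl⟩)
      (fun x hx => by rw [show x = ⟨0, by omega⟩ from Fin.ext hx]; exact h0)
      x.1 (by omega) (by omega) x rfl
  · obtain ⟨e, he⟩ := path_reversal n hn
    refine two_le_distNum e ⟨0, by omega⟩ (fun heq => ?_)
    have := congrArg Fin.val heq
    rw [he] at this
    simp only [] at this
    omega


lemma distNum_induce_compl_empty {V : Type*} (G : SimpleGraph V) :
    distNum (G.induce (∅ : Set V)ᶜ) = distNum G := by
  refine distNum_congr ⟨Equiv.subtypeUnivEquiv (by simp), ?_⟩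
  intro a b
  simp [Equiv.subtypeUnivEquiv]

lemma mem_cs {n : ℕ} {v : Fin n} {x : Fin n} :
    x ∈ ({v} : Set (Fin n))ᶜ ↔ x.1 ≠ v.1 := by
  simp [Fin.ext_iff]

lemma distNum_induce_last (n : ℕ) (hn : 2 ≤ n) :
    distNum ((pathGraph n).induce ({(⟨n - 1, by omega⟩ : Fin n)} : Set (Fin n))ᶜ)
      = distNum (pathGraph (n - 1)) := by
  refine distNum_congr ⟨⟨fun x => ⟨x.1.1, ?_⟩, fun y => ⟨⟨y.1, by omega⟩, ?_⟩, ?_, ?_⟩, ?_⟩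
  · have hx := mem_cs.1 x.2
    have := x.1.2
    simp only [] at hx
    omega
  · rw [mem_cs]
    have := y.2
    simp only []
    omega
  · intro x
    exact Subtype.ext (Fin.ext rfl)
  · intro y
    exact Fin.ext rfl
  · intro a b
    simp only [Equiv.coe_fn_mk, pathGraph_adj, induce_path_adj]

lemma distNum_induce_mirror (n : ℕ) (hn : 1 ≤ n) (v : Fin n) :
    distNum ((pathGraph n).induce ({v} : Set (Fin n))ᶜ)
      = distNum ((pathGraph n).induce
          ({(⟨n - 1 - v.1, by omega⟩ : Fin n)} : Set (Fin n))ᶜ) := by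
  refine distNum_congr ⟨⟨fun x => ⟨⟨n - 1 - x.1.1, by omega⟩, ?_⟩,
    fun y => ⟨⟨n - 1 - y.1.1, by omega⟩, ?_⟩, ?_, ?_⟩, ?_⟩
  · rw [mem_cs]
    have hx := mem_cs.1 x.2
    have h1 := x.1.2
    have h2 := v.2
    simp only [] at hx ⊢
    omega
  · rw [mem_cs]
    have hy := mem_cs.1 y.2
    have h1 := y.1.2
    have h2 := v.2
    simp only [] at hy ⊢
    omega
  · intro x
    have := x.1.2
    exact Subtype.ext (Fin.ext (by simp only []; omega))
  · intro y
    have := y.1.2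
    exact Subtype.ext (Fin.ext (by simp only []; omega))
  · intro a b
    have ha := a.1.2
    have hb := b.1.2
    simp only [Equiv.coe_fn_mk, induce_path_adj]
    omega


lemma ite_one_zero_iff {p q : Prop} [Decidable p] [Decidable q]
    (h : (if p then (1 : Fin 2) else 0) = (if q then 1 else 0)) : p ↔ q := by
  by_cases hp : p <;> by_cases hq : q
  · exact iff_of_true hp hq
  · rw [if_pos hp, if_neg hq] at h; exact absurd h (by decide)
  · rw [if_neg hp, if_pos hq] at h; exact absurd h (by decide)
  · exact iff_of_false hp hq

def wmk {n : ℕ} (v : Fin n) (k : ℕ) (h1 : k < n) (h2 : k ≠ v.1) :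
    ↥(({v} : Set (Fin n))ᶜ) := ⟨⟨k, h1⟩, mem_cs.2 h2⟩

@[simp] lemma wmk_val {n : ℕ} (v : Fin n) (k : ℕ) (h1 : k < n) (h2 : k ≠ v.1) :
    (wmk v k h1 h2).1.1 = k := rfl

def rrev {n : ℕ} (v : Fin n) (hv4 : v.1 + 4 ≤ n) (x : ↥(({v} : Set (Fin n))ᶜ)) :
    ↥(({v} : Set (Fin n))ᶜ) :=
  if h : x.1.1 < v.1 then x
  else wmk v (n + v.1 - x.1.1)
    (by have h1 := mem_cs.1 x.2; have h2 := x.1.2; omega)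
    (by have h1 := mem_cs.1 x.2; have h2 := x.1.2; omega)

lemma rrev_val {n : ℕ} (v : Fin n) (hv4 : v.1 + 4 ≤ n) (x : ↥(({v} : Set (Fin n))ᶜ)) :
    (rrev v hv4 x).1.1 = if x.1.1 < v.1 then x.1.1 else n + v.1 - x.1.1 := by
  unfold rrev
  by_cases h : x.1.1 < v.1
  · rw [dif_pos h, if_pos h]
  · rw [dif_neg h, if_neg h, wmk_val]

lemma distNum_removal_mid (n : ℕ) (v : Fin n) (hv1 : 1 ≤ v.1) (hv4 : v.1 + 4 ≤ n) :
    distNum ((pathGraph n).induce ({v} : Set (Fin n))ᶜ) = 2 := by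
  have hvn := v.2
  have hinj : ∀ x y : ↥(({v} : Set (Fin n))ᶜ), x.1.1 = y.1.1 → x = y :=
    fun x y h => Subtype.ext (Fin.ext h)
  have hne : ∀ y : ↥(({v} : Set (Fin n))ᶜ), y.1.1 ≠ v.1 := fun y => mem_cs.1 y.2
  have hlt : ∀ y : ↥(({v} : Set (Fin n))ᶜ), y.1.1 < n := fun y => y.1.2
  refine le_antisymm ?_ ?_
  · -- upper bound with marking {0, v+1, v+2}
    refine distNum_le
      (fun x => if x.1.1 = 0 ∨ x.1.1 = v.1 + 1 ∨ x.1.1 = v.1 + 2 then (1 : Fin 2) else 0)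
      (fun φ h x => ?_)
    have hM : ∀ y : ↥(({v} : Set (Fin n))ᶜ),
        ((φ y).1.1 = 0 ∨ (φ y).1.1 = v.1 + 1 ∨ (φ y).1.1 = v.1 + 2) ↔
        (y.1.1 = 0 ∨ y.1.1 = v.1 + 1 ∨ y.1.1 = v.1 + 2) :=
      fun y => ite_one_zero_iff (h y)
    set z0 := wmk v 0 (by omega) (by omega) with hz0def
    set w1 := wmk v (v.1 + 1) (by omega) (by omega) with hw1def
    set w2 := wmk v (v.1 + 2) (by omega) (by omega) with hw2def
    set w3 := wmk v (v.1 + 3) (by omega) (by omega) with hw3def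
    have hz0v : z0.1.1 = 0 := rfl
    have hw1v : w1.1.1 = v.1 + 1 := rfl
    have hw2v : w2.1.1 = v.1 + 2 := rfl
    have hw3v : w3.1.1 = v.1 + 3 := rfl
    have hb1 := (hM w1).2 (by omega)
    have hb2 := (hM w2).2 (by omega)
    have hAdjb' := (induce_path_adj _ _).1
      (φ.map_rel_iff.2 ((induce_path_adj w1 w2).2 (by omega)))
    have hm1 := hne (φ w1)
    have hm2 := hne (φ w2)
    have hfix1v : (φ w1).1.1 = v.1 + 1 := by
      by_contra hc
      have hc1 : (φ w1).1.1 = v.1 + 2 := by omega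
      have hc2 : (φ w2).1.1 = v.1 + 1 := by omega
      have hAdjb3 := (induce_path_adj _ _).1
        (φ.map_rel_iff.2 ((induce_path_adj w2 w3).2 (by omega)))
      have hm3 := hne (φ w3)
      have h31 : φ w3 = φ w1 := hinj _ _ (by omega)
      have h31' := φ.injective h31
      rw [h31'] at hw3v
      omega
    have hfix1 : φ w1 = w1 := hinj _ _ (by omega)
    have hfix2v : (φ w2).1.1 = v.1 + 2 := by omega
    have hfix2 : φ w2 = w2 := hinj _ _ (by omega)
    have hfix0 : φ z0 = z0 := by
      have hb0 := (hM z0).2 (by omega)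
      rcases hb0 with h1 | h1 | h1
      · exact hinj _ _ (by omega)
      · have h' := φ.injective (hinj (φ z0) (φ w1) (by omega))
        rw [h'] at hz0v
        omega
      · have h' := φ.injective (hinj (φ z0) (φ w2) (by omega))
        rw [h'] at hz0v
        omega
    have hleft := fix_propagate φ (fun t => t.1.1) hinj (fun x y => induce_path_adj x y)
      0 (v.1 - 1) (fun x => by omega)
      (fun k hk hkr => ⟨wmk v k (by omega) (by omega), rfl⟩)
      (fun x hx => by rw [hinj x z0 (by have hx' : x.1.1 = 0 := hx; omega)]; exact hfix0)
    have hright := fix_propagate φ (fun t => t.1.1) hinj (fun x y => induce_path_adj x y)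
      (v.1 + 1) (n - 1)
      (fun x hx => by
        have hx' : x.1.1 + 1 = v.1 + 1 := hx
        exact (hne x) (by omega))
      (fun k hk hkr => ⟨wmk v k (by omega) (by omega), rfl⟩)
      (fun x hx => by rw [hinj x w1 (by have hx' : x.1.1 = v.1 + 1 := hx; omega)]; exact hfix1)
    have hxv := hne x
    have hxn := hlt x
    rcases lt_or_ge x.1.1 v.1 with hc | hc
    · exact hleft x.1.1 (by omega) (by omega) x rfl
    · exact hright x.1.1 (by omega) (by omega) x rfl
  · -- lower bound : reverse the right-hand component
    have hinv : Function.Involutive (rrev v hv4) := by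
      intro x
      have hx2 := hne x
      have hxn := hlt x
      apply hinj
      rw [rrev_val, rrev_val]
      split_ifs <;> omega
    have hkey : ∀ x y, ((pathGraph n).induce ({v} : Set (Fin n))ᶜ).Adj x y →
        ((pathGraph n).induce ({v} : Set (Fin n))ᶜ).Adj (rrev v hv4 x) (rrev v hv4 y) := by
      intro x y hA
      rw [induce_path_adj] at hA ⊢
      rw [rrev_val, rrev_val]
      have := hne x
      have := hne y
      have := hlt x
      have := hlt y
      split_ifs <;> omega
    obtain ⟨e, he⟩ := iso_of_involutive (rrev v hv4) hinv hkey
    refine two_le_distNum e (wmk v (v.1 + 1) (by omega) (by omega)) (fun hc => ?_)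
    rw [he] at hc
    have h1 : (rrev v hv4 (wmk v (v.1 + 1) (by omega) (by omega))).1.1
        = (wmk v (v.1 + 1) (by omega) (by omega)).1.1 := by rw [hc]
    rw [rrev_val, wmk_val] at h1
    rw [if_neg (by omega)] at h1
    omega


lemma distNum_ge_three (n : ℕ) (hn : 5 ≤ n) (S : Set (Fin n))
    (hmem : ∀ (k : ℕ) (hk : k < n), (k = 0 ∨ k = 1 ∨ k = 3 ∨ k = 4) → (⟨k, hk⟩ : Fin n) ∉ S)
    (hout : ∀ x : Fin n, x ∉ S → x.1 ≠ 2 ∧ x.1 ≠ 5) :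
    3 ≤ distNum ((pathGraph n).induce Sᶜ) := by
  classical
  have hinj : ∀ x y : ↥Sᶜ, x.1.1 = y.1.1 → x = y :=
    fun x y h => Subtype.ext (Fin.ext h)
  have hvne : ∀ y : ↥Sᶜ, y.1.1 ≠ 2 ∧ y.1.1 ≠ 5 := fun y => hout y.1 y.2
  obtain ⟨w0, h0v⟩ : ∃ w : ↥Sᶜ, w.1.1 = 0 :=
    ⟨⟨⟨0, by omega⟩, hmem 0 (by omega) (by tauto)⟩, rfl⟩
  obtain ⟨w1, h1v⟩ : ∃ w : ↥Sᶜ, w.1.1 = 1 :=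
    ⟨⟨⟨1, by omega⟩, hmem 1 (by omega) (by tauto)⟩, rfl⟩
  obtain ⟨w3, h3v⟩ : ∃ w : ↥Sᶜ, w.1.1 = 3 :=
    ⟨⟨⟨3, by omega⟩, hmem 3 (by omega) (by tauto)⟩, rfl⟩
  obtain ⟨w4, h4v⟩ : ∃ w : ↥Sᶜ, w.1.1 = 4 :=
    ⟨⟨⟨4, by omega⟩, hmem 4 (by omega) (by tauto)⟩, rfl⟩
  have hadj01 : ((pathGraph n).induce Sᶜ).Adj w0 w1 := (induce_path_adj _ _).2 (by omega)
  have hadj34 : ((pathGraph n).induce Sᶜ).Adj w3 w4 := (induce_path_adj _ _).2 (by omega)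
  have hN0 : ∀ x, ((pathGraph n).induce Sᶜ).Adj x w0 → x = w1 := by
    intro x hA
    have := (induce_path_adj _ _).1 hA
    exact hinj _ _ (by omega)
  have hN1 : ∀ x, ((pathGraph n).induce Sᶜ).Adj x w1 → x = w0 := by
    intro x hA
    have := (induce_path_adj _ _).1 hA
    have := hvne x
    exact hinj _ _ (by omega)
  have hN3 : ∀ x, ((pathGraph n).induce Sᶜ).Adj x w3 → x = w4 := by
    intro x hA
    have := (induce_path_adj _ _).1 hA
    have := hvne x
    exact hinj _ _ (by omega)
  have hN4 : ∀ x, ((pathGraph n).induce Sᶜ).Adj x w4 → x = w3 := by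
    intro x hA
    have := (induce_path_adj _ _).1 hA
    have := hvne x
    exact hinj _ _ (by omega)
  have wne : ∀ {x y : ↥Sᶜ}, x.1.1 ≠ y.1.1 → x ≠ y :=
    fun {x y} hx h => hx (congrArg (fun t : ↥Sᶜ => t.1.1) h)
  by_contra hlt
  push_neg at hlt
  have hle : distNum ((pathGraph n).induce Sᶜ) ≤ 2 := by omega
  obtain ⟨f0, hf0⟩ := distNum_exists (G := (pathGraph n).induce Sᶜ)
  set f : ↥Sᶜ → Fin 2 := fun x => Fin.castLE hle (f0 x) with hfdef
  have hf : ∀ φ : ((pathGraph n).induce Sᶜ) ≃g ((pathGraph n).induce Sᶜ),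
      (∀ x, f (φ x) = f x) → ∀ x, φ x = x :=
    fun φ hp x => hf0 φ (fun y => Fin.castLE_injective hle (hp y)) x
  have key : ∀ a b c : Fin 2, a ≠ b → c ≠ b → a = c := by decide
  by_cases h01 : f w0 = f w1
  · obtain ⟨e, he⟩ := isolated_edge_swap w0 w1 hadj01 hN0 hN1
    have hpres : ∀ x, f (e x) = f x := by
      intro x
      rw [he]
      by_cases hx0 : x = w0
      · subst hx0; rw [if_pos rfl]; exact h01.symm
      · by_cases hx1 : x = w1
        · subst hx1; rw [if_neg hx0, if_pos rfl]; exact h01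
        · rw [if_neg hx0, if_neg hx1]
    have hcon := hf e hpres w0
    rw [he, if_pos rfl] at hcon
    exact wne (by omega) hcon
  by_cases h34 : f w3 = f w4
  · obtain ⟨e, he⟩ := isolated_edge_swap w3 w4 hadj34 hN3 hN4
    have hpres : ∀ x, f (e x) = f x := by
      intro x
      rw [he]
      by_cases hx0 : x = w3
      · subst hx0; rw [if_pos rfl]; exact h34.symm
      · by_cases hx1 : x = w4
        · subst hx1; rw [if_neg hx0, if_pos rfl]; exact h34
        · rw [if_neg hx0, if_neg hx1]
    have hcon := hf e hpres w3
    rw [he, if_pos rfl] at hcon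
    exact wne (by omega) hcon
  by_cases h03 : f w0 = f w3
  · have h14 : f w1 = f w4 :=
      key _ _ _ (fun hh => h01 hh.symm) (fun hh => h34 (h03 ▸ hh).symm)
    obtain ⟨e, he⟩ := two_isolated_edges_swap w0 w1 w3 w4 hadj01 hadj34 hN0 hN1 hN3 hN4
      (wne (by omega)) (wne (by omega)) (wne (by omega)) (wne (by omega))
    have hpres : ∀ x, f (e x) = f x := by
      intro x
      rw [he]
      by_cases hx0 : x = w0
      · subst hx0; rw [if_pos rfl]; exact h03.symm
      · by_cases hx1 : x = w1
        · subst hx1; rw [if_neg hx0, if_pos rfl]; exact h14.symm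
        · by_cases hx3 : x = w3
          · subst hx3; rw [if_neg hx0, if_neg hx1, if_pos rfl]; exact h03
          · by_cases hx4 : x = w4
            · subst hx4; rw [if_neg hx0, if_neg hx1, if_neg hx3, if_pos rfl]; exact h14
            · rw [if_neg hx0, if_neg hx1, if_neg hx3, if_neg hx4]
    have hcon := hf e hpres w0
    rw [he, if_pos rfl] at hcon
    exact wne (by omega) hcon
  · have h14 : f w1 = f w3 :=
      key _ _ _ (fun hh => h01 hh.symm) (fun hh => h03 hh.symm)
    have h40 : f w4 = f w0 :=
      key _ _ _ (fun hh => h34 hh.symm) h03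
    obtain ⟨e, he⟩ := two_isolated_edges_swap w0 w1 w4 w3 hadj01 hadj34.symm hN0 hN1 hN4 hN3
      (wne (by omega)) (wne (by omega)) (wne (by omega)) (wne (by omega))
    have hpres : ∀ x, f (e x) = f x := by
      intro x
      rw [he]
      by_cases hx0 : x = w0
      · subst hx0; rw [if_pos rfl]; exact h40
      · by_cases hx1 : x = w1
        · subst hx1; rw [if_neg hx0, if_pos rfl]; exact h14.symm
        · by_cases hx4 : x = w4
          · subst hx4; rw [if_neg hx0, if_neg hx1, if_pos rfl]; exact h40.symm
          · by_cases hx3 : x = w3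
            · subst hx3; rw [if_neg hx0, if_neg hx1, if_neg hx4, if_pos rfl]; exact h14
            · rw [if_neg hx0, if_neg hx1, if_neg hx4, if_neg hx3]
    have hcon := hf e hpres w0
    rw [he, if_pos rfl] at hcon
    exact wne (by omega) hcon

lemma sInf_eq_of (s : Set ℕ) (k : ℕ) (hk : k ∈ s) (hlt : ∀ j, j < k → j ∉ s) :
    sInf s = k := by
  refine le_antisymm (Nat.sInf_le hk) ?_
  by_contra h
  push_neg at h
  exact hlt _ h (Nat.sInf_mem ⟨k, hk⟩)

lemma zero_aux {n : ℕ} (G : SimpleGraph (Fin n)) (S : Set (Fin n)) (h : S.ncard = 0) :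
    distNum (G.induce Sᶜ) = distNum G := by
  have hS : S = ∅ := (Set.ncard_eq_zero (Set.toFinite S)).1 h
  subst hS
  exact distNum_induce_compl_empty G

lemma distNum_eq_two_of_card {V : Type*} [Finite V] (G : SimpleGraph V)
    (h : Nat.card V = 2) : distNum G = 2 := by
  obtain ⟨x, y, hxy, huniv⟩ := Nat.card_eq_two_iff.1 h
  refine distNum_eq_two_of_two_elems x y hxy (fun c => ?_)
  have : c ∈ ({x, y} : Set V) := huniv ▸ Set.mem_univ c
  simpa using this

lemma compl_card {n : ℕ} (S : Set (Fin n)) : Nat.card ↥(Sᶜ) = n - S.ncard := by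
  rw [Nat.card_coe_set_eq]
  have h := Set.ncard_add_ncard_compl S
  rw [Nat.card_eq_fintype_card, Fintype.card_fin] at h
  omega

-- every single-vertex removal from P₃ leaves distinguishing number 2
lemma removal3 (v : Fin 3) : distNum ((pathGraph 3).induce ({v} : Set (Fin 3))ᶜ) = 2 := by
  have hv3 := v.2
  obtain ⟨a, hav⟩ : ∃ a : ↥(({v} : Set (Fin 3))ᶜ), a.1.1 = if v.1 = 0 then 1 else 0 :=
    ⟨⟨⟨if v.1 = 0 then 1 else 0, by split_ifs <;> omega⟩,
      mem_cs.2 (by show (if v.1 = 0 then 1 else 0) ≠ v.1; split_ifs <;> omega)⟩, rfl⟩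
  obtain ⟨b, hbv⟩ : ∃ b : ↥(({v} : Set (Fin 3))ᶜ), b.1.1 = if v.1 = 2 then 1 else 2 :=
    ⟨⟨⟨if v.1 = 2 then 1 else 2, by split_ifs <;> omega⟩,
      mem_cs.2 (by show (if v.1 = 2 then 1 else 2) ≠ v.1; split_ifs <;> omega)⟩, rfl⟩
  refine distNum_eq_two_of_two_elems a b (fun h => ?_) (fun c => ?_)
  · rw [h, hbv] at hav
    split_ifs at hav <;> omega
  · have hc := mem_cs.1 c.2
    have hc3 := c.1.2
    have : c.1.1 = a.1.1 ∨ c.1.1 = b.1.1 := by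
      rw [hav, hbv]; split_ifs <;> omega
    rcases this with h | h
    · exact Or.inl (Subtype.ext (Fin.ext h))
    · exact Or.inr (Subtype.ext (Fin.ext h))

-- every single-vertex removal from P₄ leaves distinguishing number 2
lemma removal4 (v : Fin 4) : distNum ((pathGraph 4).induce ({v} : Set (Fin 4))ᶜ) = 2 := by
  classical
  have hv4 := v.2
  by_cases h3 : v.1 = 3
  · rw [show v = ⟨3, by omega⟩ from Fin.ext h3, distNum_induce_last 4 (by omega)]
    exact distNum_pathGraph 3 (by omega)
  by_cases h0 : v.1 = 0
  · rw [distNum_induce_mirror 4 (by omega) v,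
      show (⟨4 - 1 - v.1, by omega⟩ : Fin 4) = ⟨3, by omega⟩ from Fin.ext (by show 4 - 1 - v.1 = 3; omega),
      distNum_induce_last 4 (by omega)]
    exact distNum_pathGraph 3 (by omega)
  -- now v.1 = 1 or v.1 = 2
  have hinj : ∀ x y : ↥(({v} : Set (Fin 4))ᶜ), x.1.1 = y.1.1 → x = y :=
    fun x y h => Subtype.ext (Fin.ext h)
  obtain ⟨p, hpv⟩ : ∃ p : ↥(({v} : Set (Fin 4))ᶜ), p.1.1 = if v.1 = 1 then 0 else 3 :=
    ⟨⟨⟨if v.1 = 1 then 0 else 3, by split_ifs <;> omega⟩,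
      mem_cs.2 (by show (if v.1 = 1 then 0 else 3) ≠ v.1; split_ifs <;> omega)⟩, rfl⟩
  obtain ⟨q, hqv⟩ : ∃ q : ↥(({v} : Set (Fin 4))ᶜ), q.1.1 = if v.1 = 1 then 2 else 0 :=
    ⟨⟨⟨if v.1 = 1 then 2 else 0, by split_ifs <;> omega⟩,
      mem_cs.2 (by show (if v.1 = 1 then 2 else 0) ≠ v.1; split_ifs <;> omega)⟩, rfl⟩
  obtain ⟨r, hrv⟩ : ∃ r : ↥(({v} : Set (Fin 4))ᶜ), r.1.1 = if v.1 = 1 then 3 else 1 :=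
    ⟨⟨⟨if v.1 = 1 then 3 else 1, by split_ifs <;> omega⟩,
      mem_cs.2 (by show (if v.1 = 1 then 3 else 1) ≠ v.1; split_ifs <;> omega)⟩, rfl⟩
  have hall : ∀ c : ↥(({v} : Set (Fin 4))ᶜ), c = p ∨ c = q ∨ c = r := by
    intro c
    have hc := mem_cs.1 c.2
    have hc4 := c.1.2
    have : c.1.1 = p.1.1 ∨ c.1.1 = q.1.1 ∨ c.1.1 = r.1.1 := by
      rw [hpv, hqv, hrv]; split_ifs <;> omega
    rcases this with h | h | h
    · exact Or.inl (hinj _ _ h)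
    · exact Or.inr (Or.inl (hinj _ _ h))
    · exact Or.inr (Or.inr (hinj _ _ h))
  have hAdjqr : ((pathGraph 4).induce ({v} : Set (Fin 4))ᶜ).Adj q r :=
    (induce_path_adj _ _).2 (by rw [hqv, hrv]; split_ifs <;> omega)
  have hNq : ∀ x, ((pathGraph 4).induce ({v} : Set (Fin 4))ᶜ).Adj x q → x = r := by
    intro x hA
    have h1 := (induce_path_adj _ _).1 hA
    have h2 := mem_cs.1 x.2
    have h3 := x.1.2
    apply hinj
    rw [hqv] at h1
    rw [hrv]
    split_ifs at h1 ⊢ <;> (try simp only [false_or, or_false] at h1) <;> omega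
  have hNr : ∀ x, ((pathGraph 4).induce ({v} : Set (Fin 4))ᶜ).Adj x r → x = q := by
    intro x hA
    have h1 := (induce_path_adj _ _).1 hA
    have h2 := mem_cs.1 x.2
    have h3 := x.1.2
    apply hinj
    rw [hrv] at h1
    rw [hqv]
    split_ifs at h1 ⊢ <;> (try simp only [false_or, or_false] at h1) <;> omega
  have hpq : p ≠ q := fun h => by
    rw [h, hqv] at hpv
    split_ifs at hpv <;> omega
  have hpr : p ≠ r := fun h => by
    rw [h, hrv] at hpv
    split_ifs at hpv <;> omega
  refine le_antisymm ?_ ?_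
  · refine distNum_le (fun x => if x = r then (1 : Fin 2) else 0) (fun φ h x => ?_)
    have hφr : φ r = r := by
      by_contra hc
      have h2 : (if φ r = r then (1 : Fin 2) else 0) = (if r = r then 1 else 0) := h r
      rw [if_pos rfl, if_neg hc] at h2
      exact absurd h2 (by decide)
    have hφq : φ q = q := by
      have hA : ((pathGraph 4).induce ({v} : Set (Fin 4))ᶜ).Adj (φ q) (φ r) :=
        φ.map_rel_iff.2 hAdjqr
      rw [hφr] at hA
      exact hNr _ hA
    have hφp : φ p = p := by
      rcases hall (φ p) with h1 | h1 | h1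
      · exact h1
      · exact absurd (φ.injective (h1.trans hφq.symm)) hpq
      · exact absurd (φ.injective (h1.trans hφr.symm)) hpr
    rcases hall x with h1 | h1 | h1 <;> rw [h1]
    · exact hφp
    · exact hφq
    · exact hφr
  · obtain ⟨e, he⟩ := isolated_edge_swap q r hAdjqr hNq hNr
    refine two_le_distNum e q (fun hc => ?_)
    rw [he, if_pos rfl] at hc
    rw [← hc, hrv] at hqv
    split_ifs at hqv <;> omega

-- every single-vertex removal from P_n, n ≥ 6, leaves distinguishing number 2
lemma removal_big (n : ℕ) (hn : 6 ≤ n) (v : Fin n) :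
    distNum ((pathGraph n).induce ({v} : Set (Fin n))ᶜ) = 2 := by
  have hvn := v.2
  by_cases h1 : v.1 = n - 1
  · rw [show v = ⟨n - 1, by omega⟩ from Fin.ext h1, distNum_induce_last n (by omega)]
    exact distNum_pathGraph (n - 1) (by omega)
  by_cases h2 : 1 ≤ v.1 ∧ v.1 + 4 ≤ n
  · exact distNum_removal_mid n v h2.1 h2.2
  rw [distNum_induce_mirror n (by omega) v]
  by_cases h3 : v.1 = 0
  · rw [show (⟨n - 1 - v.1, by omega⟩ : Fin n) = ⟨n - 1, by omega⟩ from Fin.ext (by show n - 1 - v.1 = n - 1; omega),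
      distNum_induce_last n (by omega)]
    exact distNum_pathGraph (n - 1) (by omega)
  · exact distNum_removal_mid n ⟨n - 1 - v.1, by omega⟩
      (by show 1 ≤ n - 1 - v.1; omega) (by show (n - 1 - v.1) + 4 ≤ n; omega)

lemma distNum_eq_one_of (n : ℕ) (S : Set (Fin n)) (k : ℕ) (hk : k < n)
    (hmem : (⟨k, hk⟩ : Fin n) ∈ Sᶜ) (honly : ∀ x : Fin n, x ∈ Sᶜ → x.1 = k) :
    distNum ((pathGraph n).induce Sᶜ) = 1 := by
  haveI : Nonempty ↥Sᶜ := ⟨⟨_, hmem⟩⟩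
  haveI : Subsingleton ↥Sᶜ :=
    ⟨fun a b => Subtype.ext (Fin.ext ((honly a.1 a.2).trans (honly b.1 b.2).symm))⟩
  exact distNum_eq_one

/-- Distinguishing stability of paths. -/
theorem stD_pathGraph :
    stD (pathGraph 2) = 1 ∧ stD (pathGraph 3) = 2 ∧ stD (pathGraph 4) = 3 ∧
      stD (pathGraph 5) = 1 ∧ ∀ n : ℕ, 6 ≤ n → stD (pathGraph n) = 2 := by
  refine ⟨?_, ?_, ?_, ?_, ?_⟩
  · -- P2
    unfold stD
    apply sInf_eq_of
    · refine ⟨({⟨1, by omega⟩} : Set (Fin 2)), ?_, Set.ncard_singleton _, ?_⟩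
      · intro h
        have h0 : (⟨0, by omega⟩ : Fin 2) ∈ ({⟨1, by omega⟩} : Set (Fin 2)) :=
          h.symm ▸ Set.mem_univ _
        rw [Set.mem_singleton_iff] at h0
        exact (by omega : (0 : ℕ) ≠ 1) (congrArg Fin.val h0)
      · rw [distNum_eq_one_of 2 _ 0 (by omega)
            (mem_cs.2 (by show (0 : ℕ) ≠ 1; omega))
            (fun x hx => by
              have h1 : x.1 ≠ 1 := mem_cs.1 hx
              have := x.2
              omega),
          distNum_pathGraph 2 (by omega)]
        omega
    · intro j hj hmem
      obtain ⟨S, h1, h2, h3⟩ := hmem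
      interval_cases j
      exact h3 (zero_aux _ S h2)
  · -- P3
    unfold stD
    apply sInf_eq_of
    · refine ⟨({⟨0, by omega⟩, ⟨1, by omega⟩} : Set (Fin 3)), ?_,
        Set.ncard_pair (fun h => (by omega : (0 : ℕ) ≠ 1) (congrArg Fin.val h)), ?_⟩
      · intro h
        have h0 : (⟨2, by omega⟩ : Fin 3) ∈
            ({⟨0, by omega⟩, ⟨1, by omega⟩} : Set (Fin 3)) := h.symm ▸ Set.mem_univ _
        simp only [Set.mem_insert_iff, Set.mem_singleton_iff, Fin.mk.injEq] at h0
        omega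
      · rw [distNum_eq_one_of 3 _ 2 (by omega)
            (by
              simp only [Set.mem_compl_iff, Set.mem_insert_iff, Set.mem_singleton_iff,
                not_or, Fin.mk.injEq]
              omega)
            (fun x hx => by
              simp only [Set.mem_compl_iff, Set.mem_insert_iff, Set.mem_singleton_iff,
                not_or] at hx
              have h1 : x.1 ≠ 0 := fun hh => hx.1 (Fin.ext hh)
              have h2 : x.1 ≠ 1 := fun hh => hx.2 (Fin.ext hh)
              have := x.2
              omega),
          distNum_pathGraph 3 (by omega)]
        omega
    · intro j hj hmem
      obtain ⟨S, h1, h2, h3⟩ := hmem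
      interval_cases j
      · exact h3 (zero_aux _ S h2)
      · obtain ⟨v, rfl⟩ := Set.ncard_eq_one.1 h2
        exact h3 (by rw [removal3 v, distNum_pathGraph 3 (by omega)])
  · -- P4
    unfold stD
    apply sInf_eq_of
    · refine ⟨({⟨0, by omega⟩, ⟨1, by omega⟩, ⟨2, by omega⟩} : Set (Fin 4)), ?_,
        Set.ncard_eq_three.2 ⟨⟨0, by omega⟩, ⟨1, by omega⟩, ⟨2, by omega⟩,
          fun h => (by omega : (0 : ℕ) ≠ 1) (congrArg Fin.val h),
          fun h => (by omega : (0 : ℕ) ≠ 2) (congrArg Fin.val h),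
          fun h => (by omega : (1 : ℕ) ≠ 2) (congrArg Fin.val h), rfl⟩, ?_⟩
      · intro h
        have h0 : (⟨3, by omega⟩ : Fin 4) ∈
            ({⟨0, by omega⟩, ⟨1, by omega⟩, ⟨2, by omega⟩} : Set (Fin 4)) :=
          h.symm ▸ Set.mem_univ _
        simp only [Set.mem_insert_iff, Set.mem_singleton_iff, Fin.mk.injEq] at h0
        omega
      · rw [distNum_eq_one_of 4 _ 3 (by omega)
            (by
              simp only [Set.mem_compl_iff, Set.mem_insert_iff, Set.mem_singleton_iff,
                not_or, Fin.mk.injEq]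
              omega)
            (fun x hx => by
              simp only [Set.mem_compl_iff, Set.mem_insert_iff, Set.mem_singleton_iff,
                not_or] at hx
              have h1 : x.1 ≠ 0 := fun hh => hx.1 (Fin.ext hh)
              have h2 : x.1 ≠ 1 := fun hh => hx.2.1 (Fin.ext hh)
              have h3 : x.1 ≠ 2 := fun hh => hx.2.2 (Fin.ext hh)
              have := x.2
              omega),
          distNum_pathGraph 4 (by omega)]
        omega
    · intro j hj hmem
      obtain ⟨S, h1, h2, h3⟩ := hmem
      interval_cases j
      · exact h3 (zero_aux _ S h2)
      · obtain ⟨v, rfl⟩ := Set.ncard_eq_one.1 h2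
        exact h3 (by rw [removal4 v, distNum_pathGraph 4 (by omega)])
      · obtain ⟨a, b, hab, rfl⟩ := Set.ncard_eq_two.1 h2
        refine h3 ?_
        rw [distNum_eq_two_of_card _ (by rw [compl_card, h2]),
          distNum_pathGraph 4 (by omega)]
  · -- P5
    unfold stD
    have h25 : (2 : ℕ) < 5 := by omega
    apply sInf_eq_of
    · refine ⟨({⟨2, h25⟩} : Set (Fin 5)), ?_, Set.ncard_singleton _, ?_⟩
      · intro h
        have h0 : (⟨0, by omega⟩ : Fin 5) ∈ ({⟨2, h25⟩} : Set (Fin 5)) :=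
          h.symm ▸ Set.mem_univ _
        rw [Set.mem_singleton_iff] at h0
        exact (by omega : (0 : ℕ) ≠ 2) (congrArg Fin.val h0)
      · have h3' := distNum_ge_three 5 (by omega) ({⟨2, h25⟩} : Set (Fin 5))
          (fun k hk hd hc => by
            rw [Set.mem_singleton_iff] at hc
            have hk2 : k = 2 := congrArg Fin.val hc
            omega)
          (fun x hx => by
            refine ⟨fun h2 => hx (by rw [Set.mem_singleton_iff]; exact Fin.ext h2), ?_⟩
            have := x.2
            omega)
        rw [distNum_pathGraph 5 (by omega)]
        omega
    · intro j hj hmem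
      obtain ⟨S, h1, h2, h3⟩ := hmem
      interval_cases j
      exact h3 (zero_aux _ S h2)
  · -- n ≥ 6
    intro n hn
    unfold stD
    have h2n : (2 : ℕ) < n := by omega
    have h5n : (5 : ℕ) < n := by omega
    apply sInf_eq_of
    · refine ⟨({⟨2, h2n⟩, ⟨5, h5n⟩} : Set (Fin n)), ?_,
        Set.ncard_pair (fun h => (by omega : (2 : ℕ) ≠ 5) (congrArg Fin.val h)), ?_⟩
      · intro h
        have h0 : (⟨0, by omega⟩ : Fin n) ∈
            ({⟨2, h2n⟩, ⟨5, h5n⟩} : Set (Fin n)) := h.symm ▸ Set.mem_univ _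
        simp only [Set.mem_insert_iff, Set.mem_singleton_iff, Fin.mk.injEq] at h0
        omega
      · have h3' := distNum_ge_three n (by omega) ({⟨2, h2n⟩, ⟨5, h5n⟩} : Set (Fin n))
          (fun k hk hd hc => by
            rw [Set.mem_insert_iff, Set.mem_singleton_iff] at hc
            rcases hc with hc | hc
            · have hk2 : k = 2 := congrArg Fin.val hc
              omega
            · have hk5 : k = 5 := congrArg Fin.val hc
              omega)
          (fun x hx => by
            simp only [Set.mem_insert_iff, Set.mem_singleton_iff, not_or] at hx
            exact ⟨fun h2 => hx.1 (Fin.ext h2), fun h5 => hx.2 (Fin.ext h5)⟩)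
        rw [distNum_pathGraph n (by omega)]
        omega
    · intro j hj hmem
      obtain ⟨S, h1, h2, h3⟩ := hmem
      interval_cases j
      · exact h3 (zero_aux _ S h2)
      · obtain ⟨v, rfl⟩ := Set.ncard_eq_one.1 h2
        exact h3 (by rw [removal_big n hn v, distNum_pathGraph n (by omega)])
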